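/- Let λ₀, λ₁ be probability measures on a measurable space with densities h_t = e^{u_t} 1_A / ∫_A e^{u_t} dα with respect to a finite measure α, where u_t = u_0 + t(u_1 − u_0) for bounded measurable u_0, u_1 and A a measurable set of positive α-measure. Then 2‖λ₁ − λ₀‖_{TV} ≤ ∫_0^1 λ_t(|v − λ_t(v)|) dt where v = u_1 − u_0 and λ_t(dx) = h_t(x) α(dx). -/

import Mathlib

open MeasureTheory Real Set
set_option linter.unusedSectionVars false

variable {Ω : Type*} [MeasurableSpace Ω]

/-- The interpolated exponential density `h_t = e^{u_t} 1_A / ∫_A e^{u_t} dα`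
with `u_t = u_0 + t (u_1 - u_0)`. -/
noncomputable def hdens (α : Measure Ω) (A : Set Ω) (u₀ u₁ : Ω → ℝ) (t : ℝ) (x : Ω) : ℝ :=
  A.indicator (fun y => Real.exp (u₀ y + t * (u₁ y - u₀ y))) x /
    ∫ y in A, Real.exp (u₀ y + t * (u₁ y - u₀ y)) ∂α

/-- The measure `λ_t(dx) = h_t(x) α(dx)`. -/
noncomputable def lamMeas (α : Measure Ω) (A : Set Ω) (u₀ u₁ : Ω → ℝ) (t : ℝ) : Measure Ω :=
  α.withDensity fun x => ENNReal.ofReal (hdens α A u₀ u₁ t x)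

noncomputable def Zf (α : Measure Ω) (A : Set Ω) (u₀ u₁ : Ω → ℝ) (t : ℝ) : ℝ :=
  ∫ y in A, Real.exp (u₀ y + t * (u₁ y - u₀ y)) ∂α

noncomputable def Zd (α : Measure Ω) (A : Set Ω) (u₀ u₁ : Ω → ℝ) (t : ℝ) : ℝ :=
  ∫ y in A, (u₁ y - u₀ y) * Real.exp (u₀ y + t * (u₁ y - u₀ y)) ∂α

lemma hdens_def (α : Measure Ω) (A : Set Ω) (u₀ u₁ : Ω → ℝ) (t : ℝ) (x : Ω) :
    hdens α A u₀ u₁ t x =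
      A.indicator (fun y => Real.exp (u₀ y + t * (u₁ y - u₀ y))) x / Zf α A u₀ u₁ t := rfl

section Aux

variable {α : Measure Ω} [IsFiniteMeasure α] {A : Set Ω} {u₀ u₁ : Ω → ℝ} {C : ℝ}

lemma vabs (hbd₀ : ∀ x, |u₀ x| ≤ C) (hbd₁ : ∀ x, |u₁ x| ≤ C) (x : Ω) :
    |u₁ x - u₀ x| ≤ 2 * C := by
  have h0 := abs_le.mp (hbd₀ x); have h1 := abs_le.mp (hbd₁ x)
  exact abs_le.mpr ⟨by linarith, by linarith⟩

lemma argabs (hbd₀ : ∀ x, |u₀ x| ≤ C) (hbd₁ : ∀ x, |u₁ x| ≤ C) (s : ℝ) (x : Ω) :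
    |u₀ x + s * (u₁ x - u₀ x)| ≤ C + |s| * (2 * C) := by
  calc |u₀ x + s * (u₁ x - u₀ x)| ≤ |u₀ x| + |s * (u₁ x - u₀ x)| := abs_add_le _ _
    _ = |u₀ x| + |s| * |u₁ x - u₀ x| := by rw [abs_mul]
    _ ≤ C + |s| * (2 * C) :=
        add_le_add (hbd₀ x) (mul_le_mul_of_nonneg_left (vabs hbd₀ hbd₁ x) (abs_nonneg s))

lemma g_le (hbd₀ : ∀ x, |u₀ x| ≤ C) (hbd₁ : ∀ x, |u₁ x| ≤ C) (s : ℝ) (x : Ω) :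
    Real.exp (u₀ x + s * (u₁ x - u₀ x)) ≤ Real.exp (C + |s| * (2 * C)) :=
  Real.exp_le_exp.mpr ((le_abs_self _).trans (argabs hbd₀ hbd₁ s x))

lemma g_ge (hbd₀ : ∀ x, |u₀ x| ≤ C) (hbd₁ : ∀ x, |u₁ x| ≤ C) (s : ℝ) (x : Ω) :
    Real.exp (-(C + |s| * (2 * C))) ≤ Real.exp (u₀ x + s * (u₁ x - u₀ x)) :=
  Real.exp_le_exp.mpr (by linarith [neg_abs_le (u₀ x + s * (u₁ x - u₀ x)), argabs hbd₀ hbd₁ s x])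

lemma g_meas (hu₀ : Measurable u₀) (hu₁ : Measurable u₁) (s : ℝ) :
    Measurable fun x => Real.exp (u₀ x + s * (u₁ x - u₀ x)) :=
  (hu₀.add (((hu₁.sub hu₀)).const_mul s)).exp

lemma g_int (hu₀ : Measurable u₀) (hu₁ : Measurable u₁)
    (hbd₀ : ∀ x, |u₀ x| ≤ C) (hbd₁ : ∀ x, |u₁ x| ≤ C) (s : ℝ) :
    Integrable (fun x => Real.exp (u₀ x + s * (u₁ x - u₀ x))) (α.restrict A) :=
  (integrable_const (Real.exp (C + |s| * (2 * C)))).mono'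
    (g_meas hu₀ hu₁ s).aestronglyMeasurable
    (Filter.Eventually.of_forall fun x => by
      rw [Real.norm_eq_abs, abs_of_pos (Real.exp_pos _)]; exact g_le hbd₀ hbd₁ s x)

lemma vg_int (hu₀ : Measurable u₀) (hu₁ : Measurable u₁)
    (hbd₀ : ∀ x, |u₀ x| ≤ C) (hbd₁ : ∀ x, |u₁ x| ≤ C) (s : ℝ) :
    Integrable (fun x => (u₁ x - u₀ x) * Real.exp (u₀ x + s * (u₁ x - u₀ x)))
      (α.restrict A) := by
  refine (integrable_const (2 * C * Real.exp (C + |s| * (2 * C)))).mono'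
    (((hu₁.sub hu₀).mul (g_meas hu₀ hu₁ s)).aestronglyMeasurable)
    (Filter.Eventually.of_forall fun x => ?_)
  have h1 : |u₁ x - u₀ x| ≤ 2 * C := vabs hbd₀ hbd₁ x
  have h2 : (0:ℝ) ≤ 2 * C := le_trans (abs_nonneg _) h1
  rw [Real.norm_eq_abs, abs_mul, abs_of_pos (Real.exp_pos _)]
  exact mul_le_mul h1 (g_le hbd₀ hbd₁ s x) (Real.exp_pos _).le h2

lemma Zf_pos (hA : MeasurableSet A) (hApos : 0 < α A)
    (hu₀ : Measurable u₀) (hu₁ : Measurable u₁)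
    (hbd₀ : ∀ x, |u₀ x| ≤ C) (hbd₁ : ∀ x, |u₁ x| ≤ C) (s : ℝ) :
    0 < Zf α A u₀ u₁ s := by
  have h1 : (0:ℝ) < (α A).toReal := ENNReal.toReal_pos hApos.ne' (measure_ne_top α A)
  have h2 : ∫ _ in A, Real.exp (-(C + |s| * (2 * C))) ∂α ≤ Zf α A u₀ u₁ s := by
    refine integral_mono (integrable_const _) (g_int hu₀ hu₁ hbd₀ hbd₁ s) ?_
    exact fun x => g_ge hbd₀ hbd₁ s x
  rw [setIntegral_const] at h2
  calc (0:ℝ) < (α A).toReal • Real.exp (-(C + |s| * (2 * C))) := by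
        exact mul_pos h1 (Real.exp_pos _)
    _ ≤ Zf α A u₀ u₁ s := h2

lemma Zf_hasDeriv (hA : MeasurableSet A)
    (hu₀ : Measurable u₀) (hu₁ : Measurable u₁)
    (hbd₀ : ∀ x, |u₀ x| ≤ C) (hbd₁ : ∀ x, |u₁ x| ≤ C) (t : ℝ) :
    HasDerivAt (Zf α A u₀ u₁) (Zd α A u₀ u₁ t) t := by
  have key := hasDerivAt_integral_of_dominated_loc_of_deriv_le
    (F := fun s x => Real.exp (u₀ x + s * (u₁ x - u₀ x)))
    (F' := fun s x => (u₁ x - u₀ x) * Real.exp (u₀ x + s * (u₁ x - u₀ x)))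
    (μ := α.restrict A) (x₀ := t)
    (bound := fun _ => 2 * C * Real.exp (C + (|t| + 1) * (2 * C)))
    (s := Metric.ball t 1) (Metric.ball_mem_nhds t one_pos)
    (Filter.Eventually.of_forall fun s => (g_meas hu₀ hu₁ s).aestronglyMeasurable)
    (g_int hu₀ hu₁ hbd₀ hbd₁ t)
    (((hu₁.sub hu₀).mul (g_meas hu₀ hu₁ t)).aestronglyMeasurable)
    (Filter.Eventually.of_forall fun x s hs => ?_)
    (integrable_const _)
    (Filter.Eventually.of_forall fun x s _ => ?_)
  · exact key.2
  · -- bound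
    have h1 : |u₁ x - u₀ x| ≤ 2 * C := vabs hbd₀ hbd₁ x
    have h2 : (0:ℝ) ≤ 2 * C := le_trans (abs_nonneg _) h1
    have hs' : |s| ≤ |t| + 1 := by
      have := abs_sub_abs_le_abs_sub s t
      have hlt := Metric.mem_ball.mp hs
      rw [Real.dist_eq] at hlt
      linarith [le_of_lt hlt]
    have h3 : Real.exp (u₀ x + s * (u₁ x - u₀ x)) ≤ Real.exp (C + (|t| + 1) * (2 * C)) := by
      refine (g_le hbd₀ hbd₁ s x).trans (Real.exp_le_exp.mpr ?_)
      have := mul_le_mul_of_nonneg_right hs' h2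
      linarith
    rw [Real.norm_eq_abs, abs_mul, abs_of_pos (Real.exp_pos _)]
    exact mul_le_mul h1 h3 (Real.exp_pos _).le h2
  · -- differentiability
    have h : HasDerivAt (fun s : ℝ => u₀ x + s * (u₁ x - u₀ x)) (u₁ x - u₀ x) s :=
      (hasDerivAt_mul_const (u₁ x - u₀ x)).const_add (u₀ x)
    have := h.exp
    simpa [mul_comm] using this

lemma Zd_cont (hA : MeasurableSet A)
    (hu₀ : Measurable u₀) (hu₁ : Measurable u₁)
    (hbd₀ : ∀ x, |u₀ x| ≤ C) (hbd₁ : ∀ x, |u₁ x| ≤ C) :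
    Continuous (Zd α A u₀ u₁) := by
  rw [continuous_iff_continuousAt]
  intro t
  refine continuousAt_of_dominated (μ := α.restrict A)
    (bound := fun _ => 2 * C * Real.exp (C + (|t| + 1) * (2 * C)))
    (Filter.Eventually.of_forall fun s =>
      ((hu₁.sub hu₀).mul (g_meas hu₀ hu₁ s)).aestronglyMeasurable) ?_ (integrable_const _)
    (Filter.Eventually.of_forall fun x =>
      (Continuous.continuousAt (by fun_prop)))
  · filter_upwards [Metric.ball_mem_nhds t one_pos] with s hs
    refine Filter.Eventually.of_forall fun x => ?_
    have h1 : |u₁ x - u₀ x| ≤ 2 * C := vabs hbd₀ hbd₁ x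
    have h2 : (0:ℝ) ≤ 2 * C := le_trans (abs_nonneg _) h1
    have hs' : |s| ≤ |t| + 1 := by
      have := abs_sub_abs_le_abs_sub s t
      have hlt := Metric.mem_ball.mp hs
      rw [Real.dist_eq] at hlt
      linarith [le_of_lt hlt]
    have h3 : Real.exp (u₀ x + s * (u₁ x - u₀ x)) ≤ Real.exp (C + (|t| + 1) * (2 * C)) := by
      refine (g_le hbd₀ hbd₁ s x).trans (Real.exp_le_exp.mpr ?_)
      have := mul_le_mul_of_nonneg_right hs' h2
      linarith
    rw [Real.norm_eq_abs, abs_mul, abs_of_pos (Real.exp_pos _)]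
    exact mul_le_mul h1 h3 (Real.exp_pos _).le h2

lemma Zd_abs_le (hA : MeasurableSet A) (hApos : 0 < α A)
    (hu₀ : Measurable u₀) (hu₁ : Measurable u₁)
    (hbd₀ : ∀ x, |u₀ x| ≤ C) (hbd₁ : ∀ x, |u₁ x| ≤ C) (s : ℝ) :
    |Zd α A u₀ u₁ s / Zf α A u₀ u₁ s| ≤ 2 * C := by
  have hZ := Zf_pos hA hApos hu₀ hu₁ hbd₀ hbd₁ s
  rw [abs_div, abs_of_pos hZ, div_le_iff₀ hZ]
  have habs : Integrable (fun x => |u₁ x - u₀ x| * Real.exp (u₀ x + s * (u₁ x - u₀ x)))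
      (α.restrict A) := by
    refine (vg_int hu₀ hu₁ hbd₀ hbd₁ s).abs.congr
      (Filter.Eventually.of_forall fun x => ?_)
    simp only []
    rw [abs_mul, abs_of_pos (Real.exp_pos _)]
  calc |Zd α A u₀ u₁ s| ≤ ∫ x in A, |u₁ x - u₀ x| * Real.exp (u₀ x + s * (u₁ x - u₀ x)) ∂α := by
        rw [Zd]
        simpa [Real.norm_eq_abs] using
          norm_integral_le_integral_norm (μ := α.restrict A)
            fun x => (u₁ x - u₀ x) * Real.exp (u₀ x + s * (u₁ x - u₀ x))
    _ ≤ ∫ x in A, 2 * C * Real.exp (u₀ x + s * (u₁ x - u₀ x)) ∂α := by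
        refine integral_mono habs
          ((g_int hu₀ hu₁ hbd₀ hbd₁ s).const_mul _) fun x => ?_
        exact mul_le_mul_of_nonneg_right (vabs hbd₀ hbd₁ x) (Real.exp_pos _).le
    _ = 2 * C * Zf α A u₀ u₁ s := by rw [Zf, ← integral_const_mul]

lemma hdens_nonneg (hA : MeasurableSet A) (hApos : 0 < α A)
    (hu₀ : Measurable u₀) (hu₁ : Measurable u₁)
    (hbd₀ : ∀ x, |u₀ x| ≤ C) (hbd₁ : ∀ x, |u₁ x| ≤ C) (t : ℝ) (x : Ω) :
    0 ≤ hdens α A u₀ u₁ t x := by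
  rw [hdens_def]
  refine div_nonneg (Set.indicator_nonneg (fun y _ => (Real.exp_pos _).le) x)
    (Zf_pos hA hApos hu₀ hu₁ hbd₀ hbd₁ t).le

lemma hdens_le (hA : MeasurableSet A) (hApos : 0 < α A)
    (hu₀ : Measurable u₀) (hu₁ : Measurable u₁)
    (hbd₀ : ∀ x, |u₀ x| ≤ C) (hbd₁ : ∀ x, |u₁ x| ≤ C) {t : ℝ} (ht : |t| ≤ 1) (x : Ω) :
    hdens α A u₀ u₁ t x ≤
      Real.exp (C + 2 * C) / (Real.exp (-(C + 2 * C)) * (α A).toReal) := by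
  have hC : (0:ℝ) ≤ 2 * C := le_trans (abs_nonneg _) (vabs hbd₀ hbd₁ x)
  have hAt : (0:ℝ) < (α A).toReal := ENNReal.toReal_pos hApos.ne' (measure_ne_top α A)
  have hZlow : Real.exp (-(C + 2 * C)) * (α A).toReal ≤ Zf α A u₀ u₁ t := by
    have h2 : ∫ _ in A, Real.exp (-(C + |t| * (2 * C))) ∂α ≤ Zf α A u₀ u₁ t :=
      integral_mono (integrable_const _) (g_int hu₀ hu₁ hbd₀ hbd₁ t)
        (fun x => g_ge hbd₀ hbd₁ t x)
    rw [setIntegral_const, smul_eq_mul, mul_comm] at h2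
    refine le_trans (mul_le_mul_of_nonneg_right (Real.exp_le_exp.mpr ?_) hAt.le) h2
    have := mul_le_mul_of_nonneg_right ht hC
    linarith
  have hnum : A.indicator (fun y => Real.exp (u₀ y + t * (u₁ y - u₀ y))) x ≤
      Real.exp (C + 2 * C) := by
    refine Set.indicator_le' (fun y _ => ?_) (fun y _ => (Real.exp_pos _).le) x
    refine (g_le hbd₀ hbd₁ t y).trans (Real.exp_le_exp.mpr ?_)
    have := mul_le_mul_of_nonneg_right ht hC
    linarith
  rw [hdens_def]
  exact div_le_div₀ (Real.exp_pos _).le hnum (mul_pos (Real.exp_pos _) hAt) hZlow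

lemma hdens_hasDeriv (hA : MeasurableSet A) (hApos : 0 < α A)
    (hu₀ : Measurable u₀) (hu₁ : Measurable u₁)
    (hbd₀ : ∀ x, |u₀ x| ≤ C) (hbd₁ : ∀ x, |u₁ x| ≤ C) (t : ℝ) (x : Ω) :
    HasDerivAt (fun s => hdens α A u₀ u₁ s x)
      (hdens α A u₀ u₁ t x * ((u₁ x - u₀ x) - Zd α A u₀ u₁ t / Zf α A u₀ u₁ t)) t := by
  have hZ := Zf_pos hA hApos hu₀ hu₁ hbd₀ hbd₁
  by_cases hx : x ∈ A
  · have heq : (fun s => hdens α A u₀ u₁ s x) =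
        fun s => Real.exp (u₀ x + s * (u₁ x - u₀ x)) / Zf α A u₀ u₁ s := by
      funext s; rw [hdens_def, Set.indicator_of_mem hx]
    rw [heq]
    have hg : HasDerivAt (fun s : ℝ => Real.exp (u₀ x + s * (u₁ x - u₀ x)))
        ((u₁ x - u₀ x) * Real.exp (u₀ x + t * (u₁ x - u₀ x))) t := by
      have h : HasDerivAt (fun s : ℝ => u₀ x + s * (u₁ x - u₀ x)) (u₁ x - u₀ x) t :=
        (hasDerivAt_mul_const (u₁ x - u₀ x)).const_add (u₀ x)
      simpa [mul_comm] using h.exp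
    have := hg.div (Zf_hasDeriv hA hu₀ hu₁ hbd₀ hbd₁ t) (hZ t).ne'
    refine this.congr_deriv ?_
    rw [hdens_def, Set.indicator_of_mem hx]
    have hne := (hZ t).ne'
    field_simp
  · have heq : (fun s => hdens α A u₀ u₁ s x) = fun _ => (0:ℝ) := by
      funext s; rw [hdens_def, Set.indicator_of_notMem hx, zero_div]
    rw [heq, hdens_def, Set.indicator_of_notMem hx, zero_div, zero_mul]
    exact hasDerivAt_const t 0

lemma hdens_cont (hA : MeasurableSet A) (hApos : 0 < α A)
    (hu₀ : Measurable u₀) (hu₁ : Measurable u₁)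
    (hbd₀ : ∀ x, |u₀ x| ≤ C) (hbd₁ : ∀ x, |u₁ x| ≤ C) (x : Ω) :
    Continuous (fun s => hdens α A u₀ u₁ s x) := by
  have hZ := Zf_pos hA hApos hu₀ hu₁ hbd₀ hbd₁
  have hZc : Continuous (Zf α A u₀ u₁) := by
    rw [continuous_iff_continuousAt]
    exact fun t => (Zf_hasDeriv hA hu₀ hu₁ hbd₀ hbd₁ t).continuousAt
  by_cases hx : x ∈ A
  · have heq : (fun s => hdens α A u₀ u₁ s x) =
        fun s => Real.exp (u₀ x + s * (u₁ x - u₀ x)) / Zf α A u₀ u₁ s := by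
      funext s; rw [hdens_def, Set.indicator_of_mem hx]
    rw [heq]
    exact (Real.continuous_exp.comp (by fun_prop)).div hZc fun s => (hZ s).ne'
  · have heq : (fun s => hdens α A u₀ u₁ s x) = fun _ => (0:ℝ) := by
      funext s; rw [hdens_def, Set.indicator_of_notMem hx, zero_div]
    rw [heq]; exact continuous_const

lemma hdens_ftc (hA : MeasurableSet A) (hApos : 0 < α A)
    (hu₀ : Measurable u₀) (hu₁ : Measurable u₁)
    (hbd₀ : ∀ x, |u₀ x| ≤ C) (hbd₁ : ∀ x, |u₁ x| ≤ C) (x : Ω) :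
    |hdens α A u₀ u₁ 1 x - hdens α A u₀ u₁ 0 x| ≤
      ∫ t in (0:ℝ)..1,
        hdens α A u₀ u₁ t x * |(u₁ x - u₀ x) - Zd α A u₀ u₁ t / Zf α A u₀ u₁ t| := by
  have hZ := Zf_pos hA hApos hu₀ hu₁ hbd₀ hbd₁
  have hZc : Continuous (Zf α A u₀ u₁) := by
    rw [continuous_iff_continuousAt]
    exact fun t => (Zf_hasDeriv hA hu₀ hu₁ hbd₀ hbd₁ t).continuousAt
  have hcont : Continuous (fun t =>
      hdens α A u₀ u₁ t x * ((u₁ x - u₀ x) - Zd α A u₀ u₁ t / Zf α A u₀ u₁ t)) :=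
    (hdens_cont hA hApos hu₀ hu₁ hbd₀ hbd₁ x).mul
      (continuous_const.sub ((Zd_cont hA hu₀ hu₁ hbd₀ hbd₁).div hZc fun s => (hZ s).ne'))
  have heq : hdens α A u₀ u₁ 1 x - hdens α A u₀ u₁ 0 x = ∫ t in (0:ℝ)..1,
      hdens α A u₀ u₁ t x * ((u₁ x - u₀ x) - Zd α A u₀ u₁ t / Zf α A u₀ u₁ t) :=
    (intervalIntegral.integral_eq_sub_of_hasDerivAt
      (fun t _ => hdens_hasDeriv hA hApos hu₀ hu₁ hbd₀ hbd₁ t x)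
      (hcont.intervalIntegrable 0 1)).symm
  rw [heq]
  have h2 := intervalIntegral.norm_integral_le_integral_norm (μ := volume)
    (f := fun t => hdens α A u₀ u₁ t x * ((u₁ x - u₀ x) - Zd α A u₀ u₁ t / Zf α A u₀ u₁ t))
    (zero_le_one)
  rw [Real.norm_eq_abs] at h2
  refine h2.trans (le_of_eq (intervalIntegral.integral_congr fun t _ => ?_))
  rw [Real.norm_eq_abs, abs_mul,
    abs_of_nonneg (hdens_nonneg hA hApos hu₀ hu₁ hbd₀ hbd₁ t x)]

lemma hdens_meas (hA : MeasurableSet A)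
    (hu₀ : Measurable u₀) (hu₁ : Measurable u₁) (t : ℝ) :
    Measurable (hdens α A u₀ u₁ t) := by
  have : hdens α A u₀ u₁ t = fun x =>
      A.indicator (fun y => Real.exp (u₀ y + t * (u₁ y - u₀ y))) x / Zf α A u₀ u₁ t := rfl
  rw [this]
  exact ((g_meas hu₀ hu₁ t).indicator hA).div_const _

lemma lam_integral (hA : MeasurableSet A) (hApos : 0 < α A)
    (hu₀ : Measurable u₀) (hu₁ : Measurable u₁)
    (hbd₀ : ∀ x, |u₀ x| ≤ C) (hbd₁ : ∀ x, |u₁ x| ≤ C) (t : ℝ) (φ : Ω → ℝ) :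
    ∫ x, φ x ∂(lamMeas α A u₀ u₁ t) = ∫ x, hdens α A u₀ u₁ t x * φ x ∂α := by
  have hmeas : Measurable fun x => (hdens α A u₀ u₁ t x).toNNReal :=
    (hdens_meas hA hu₀ hu₁ t).real_toNNReal
  have : lamMeas α A u₀ u₁ t =
      α.withDensity fun x => ((hdens α A u₀ u₁ t x).toNNReal : ENNReal) := rfl
  rw [this, integral_withDensity_eq_integral_smul hmeas]
  refine integral_congr_ae (Filter.Eventually.of_forall fun x => ?_)
  simp only [NNReal.smul_def, smul_eq_mul]
  rw [Real.coe_toNNReal _ (hdens_nonneg hA hApos hu₀ hu₁ hbd₀ hbd₁ t x)]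

lemma lam_mean (hA : MeasurableSet A) (hApos : 0 < α A)
    (hu₀ : Measurable u₀) (hu₁ : Measurable u₁)
    (hbd₀ : ∀ x, |u₀ x| ≤ C) (hbd₁ : ∀ x, |u₁ x| ≤ C) (t : ℝ) :
    ∫ y, (u₁ y - u₀ y) ∂(lamMeas α A u₀ u₁ t) = Zd α A u₀ u₁ t / Zf α A u₀ u₁ t := by
  rw [lam_integral hA hApos hu₀ hu₁ hbd₀ hbd₁ t]
  have heq : ∀ x, hdens α A u₀ u₁ t x * (u₁ x - u₀ x) =
      A.indicator (fun y => (u₁ y - u₀ y) * Real.exp (u₀ y + t * (u₁ y - u₀ y))) x /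
        Zf α A u₀ u₁ t := by
    intro x
    by_cases hx : x ∈ A
    · rw [hdens_def, Set.indicator_of_mem hx, Set.indicator_of_mem hx]
      ring
    · simp [hdens_def, Set.indicator_of_notMem hx]
  simp only [heq]
  rw [integral_div, integral_indicator hA]
  rfl

lemma hdens_int (hA : MeasurableSet A) (hApos : 0 < α A)
    (hu₀ : Measurable u₀) (hu₁ : Measurable u₁)
    (hbd₀ : ∀ x, |u₀ x| ≤ C) (hbd₁ : ∀ x, |u₁ x| ≤ C) {t : ℝ} (ht : |t| ≤ 1) :
    Integrable (hdens α A u₀ u₁ t) α := by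
  refine (integrable_const (Real.exp (C + 2 * C) /
      (Real.exp (-(C + 2 * C)) * (α A).toReal))).mono'
    (hdens_meas hA hu₀ hu₁ t).aestronglyMeasurable
    (Filter.Eventually.of_forall fun x => ?_)
  rw [Real.norm_eq_abs, abs_of_nonneg (hdens_nonneg hA hApos hu₀ hu₁ hbd₀ hbd₁ t x)]
  exact hdens_le hA hApos hu₀ hu₁ hbd₀ hbd₁ ht x

lemma lam_apply (hA : MeasurableSet A) (hApos : 0 < α A)
    (hu₀ : Measurable u₀) (hu₁ : Measurable u₁)
    (hbd₀ : ∀ x, |u₀ x| ≤ C) (hbd₁ : ∀ x, |u₁ x| ≤ C) {t : ℝ} (ht : |t| ≤ 1)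
    {E : Set Ω} (hE : MeasurableSet E) :
    (lamMeas α A u₀ u₁ t E).toReal = ∫ x in E, hdens α A u₀ u₁ t x ∂α := by
  rw [lamMeas, withDensity_apply _ hE]
  rw [integral_eq_lintegral_of_nonneg_ae
    (Filter.Eventually.of_forall fun x => hdens_nonneg hA hApos hu₀ hu₁ hbd₀ hbd₁ t x)
    (hdens_meas hA hu₀ hu₁ t).aestronglyMeasurable.restrict]

lemma tv_le (hA : MeasurableSet A) (hApos : 0 < α A)
    (hu₀ : Measurable u₀) (hu₁ : Measurable u₁)
    (hbd₀ : ∀ x, |u₀ x| ≤ C) (hbd₁ : ∀ x, |u₁ x| ≤ C)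
    (hprob : ∀ t : ℝ, IsProbabilityMeasure (lamMeas α A u₀ u₁ t)) :
    (((lamMeas α A u₀ u₁ 1).toSignedMeasure -
        (lamMeas α A u₀ u₁ 0).toSignedMeasure).totalVariation Set.univ).toReal ≤
      ∫ x, |hdens α A u₀ u₁ 1 x - hdens α A u₀ u₁ 0 x| ∂α := by
  haveI := hprob 0
  haveI := hprob 1
  set d : Ω → ℝ := fun x => hdens α A u₀ u₁ 1 x - hdens α A u₀ u₁ 0 x with hd_def
  have hd : Integrable d α :=
    (hdens_int hA hApos hu₀ hu₁ hbd₀ hbd₁ (by norm_num)).sub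
      (hdens_int hA hApos hu₀ hu₁ hbd₀ hbd₁ (by norm_num))
  set s := (lamMeas α A u₀ u₁ 1).toSignedMeasure - (lamMeas α A u₀ u₁ 0).toSignedMeasure
    with hs_def
  have hsapp : ∀ E : Set Ω, MeasurableSet E → s E = ∫ x in E, d x ∂α := by
    intro E hE
    rw [hs_def, MeasureTheory.VectorMeasure.sub_apply,
      Measure.toSignedMeasure_apply_measurable hE,
      Measure.toSignedMeasure_apply_measurable hE,
      measureReal_def, measureReal_def,
      lam_apply hA hApos hu₀ hu₁ hbd₀ hbd₁ (by norm_num) hE,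
      lam_apply hA hApos hu₀ hu₁ hbd₀ hbd₁ (by norm_num) hE,
      ← integral_sub ((hdens_int hA hApos hu₀ hu₁ hbd₀ hbd₁ (by norm_num : |(1:ℝ)| ≤ 1)).restrict)
        ((hdens_int hA hApos hu₀ hu₁ hbd₀ hbd₁ (by norm_num : |(0:ℝ)| ≤ 1)).restrict)]
  obtain ⟨i, hi₁, hi₂, hi₃, hppos, hpneg⟩ := s.toJordanDecomposition_spec
  have htv : (s.totalVariation Set.univ).toReal = s i - s iᶜ := by
    rw [MeasureTheory.SignedMeasure.totalVariation, Measure.add_apply, hppos, hpneg,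
      MeasureTheory.SignedMeasure.toMeasureOfZeroLE_apply _ hi₂ hi₁ MeasurableSet.univ,
      MeasureTheory.SignedMeasure.toMeasureOfLEZero_apply _ hi₃ hi₁.compl MeasurableSet.univ]
    rw [← ENNReal.coe_add, ENNReal.coe_toReal]
    simp [Set.inter_univ]
    ring
  rw [htv, hsapp i hi₁, hsapp iᶜ hi₁.compl]
  have h1 : ∫ x in i, d x ∂α ≤ ∫ x in i, |d x| ∂α :=
    integral_mono hd.restrict hd.abs.restrict fun x => le_abs_self _
  have h2 : -∫ x in iᶜ, d x ∂α ≤ ∫ x in iᶜ, |d x| ∂α := by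
    have := norm_integral_le_integral_norm (μ := α.restrict iᶜ) d
    rw [Real.norm_eq_abs] at this
    simp only [Real.norm_eq_abs] at this
    linarith [neg_abs_le (∫ x in iᶜ, d x ∂α)]
  have h3 : ∫ x in i, |d x| ∂α + ∫ x in iᶜ, |d x| ∂α = ∫ x, |d x| ∂α :=
    integral_add_compl hi₁ hd.abs
  linarith

end Aux

theorem stmt_13 (α : Measure Ω) [IsFiniteMeasure α] (A : Set Ω) (hA : MeasurableSet A)
    (hApos : 0 < α A) (u₀ u₁ : Ω → ℝ) (hu₀ : Measurable u₀) (hu₁ : Measurable u₁)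
    (C : ℝ) (hbd₀ : ∀ x, |u₀ x| ≤ C) (hbd₁ : ∀ x, |u₁ x| ≤ C)
    (hprob : ∀ t : ℝ, IsProbabilityMeasure (lamMeas α A u₀ u₁ t)) :
    (((lamMeas α A u₀ u₁ 1).toSignedMeasure -
        (lamMeas α A u₀ u₁ 0).toSignedMeasure).totalVariation Set.univ).toReal ≤
      ∫ t in (0:ℝ)..1, ∫ x,
        |(u₁ x - u₀ x) - ∫ y, (u₁ y - u₀ y) ∂(lamMeas α A u₀ u₁ t)|
          ∂(lamMeas α A u₀ u₁ t) := by
  obtain ⟨x₀, hx₀⟩ : A.Nonempty := nonempty_of_measure_ne_zero hApos.ne'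
  have hC2 : (0:ℝ) ≤ 2 * C := le_trans (abs_nonneg _) (vabs hbd₀ hbd₁ x₀)
  set K := Real.exp (C + 2 * C) / (Real.exp (-(C + 2 * C)) * (α A).toReal) with hK
  set F : ℝ → Ω → ℝ := fun t x =>
    hdens α A u₀ u₁ t x * |(u₁ x - u₀ x) - Zd α A u₀ u₁ t / Zf α A u₀ u₁ t| with hF
  have hKnn : 0 ≤ K :=
    le_trans (hdens_nonneg hA hApos hu₀ hu₁ hbd₀ hbd₁ 0 x₀)
      (hdens_le hA hApos hu₀ hu₁ hbd₀ hbd₁ (by norm_num) x₀)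
  -- rewrite the RHS
  have hRHS : (∫ t in (0:ℝ)..1, ∫ x,
      |(u₁ x - u₀ x) - ∫ y, (u₁ y - u₀ y) ∂(lamMeas α A u₀ u₁ t)| ∂(lamMeas α A u₀ u₁ t))
      = ∫ t in (0:ℝ)..1, ∫ x, F t x ∂α := by
    refine intervalIntegral.integral_congr fun t _ => ?_
    rw [lam_mean hA hApos hu₀ hu₁ hbd₀ hbd₁ t, hF]
    exact lam_integral hA hApos hu₀ hu₁ hbd₀ hbd₁ t _
  rw [hRHS]
  -- joint measurability
  have hZc : Continuous (Zf α A u₀ u₁) := by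
    rw [continuous_iff_continuousAt]
    exact fun t => (Zf_hasDeriv hA hu₀ hu₁ hbd₀ hbd₁ t).continuousAt
  have hZdc := Zd_cont hA hu₀ hu₁ hbd₀ hbd₁ (α := α) (A := A)
  have hFm : Measurable (Function.uncurry F) := by
    have h1 : Measurable fun p : ℝ × Ω => hdens α A u₀ u₁ p.1 p.2 := by
      have heq : (fun p : ℝ × Ω => hdens α A u₀ u₁ p.1 p.2) = fun p : ℝ × Ω =>
          ((Set.univ ×ˢ A).indicator
            (fun q : ℝ × Ω => Real.exp (u₀ q.2 + q.1 * (u₁ q.2 - u₀ q.2))) p) /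
            Zf α A u₀ u₁ p.1 := by
        funext p
        rw [hdens_def]
        congr 1
        by_cases hx : p.2 ∈ A
        · rw [Set.indicator_of_mem hx, Set.indicator_of_mem (Set.mem_prod.mpr ⟨Set.mem_univ _, hx⟩)]
        · rw [Set.indicator_of_notMem hx, Set.indicator_of_notMem (by simp [hx])]
      rw [heq]
      refine Measurable.div ?_ (hZc.measurable.comp measurable_fst)
      exact Measurable.indicator (by fun_prop) (MeasurableSet.univ.prod hA)
    have h2 : Measurable fun p : ℝ × Ω =>
        |(u₁ p.2 - u₀ p.2) - Zd α A u₀ u₁ p.1 / Zf α A u₀ u₁ p.1| := by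
      refine Measurable.abs (Measurable.sub (by fun_prop) ?_)
      exact (hZdc.measurable.comp measurable_fst).div (hZc.measurable.comp measurable_fst)
    exact h1.mul h2
  -- integrability on the product
  haveI hfin : IsFiniteMeasure (volume.restrict (Set.Ioc (0:ℝ) 1)) := by
    constructor
    rw [Measure.restrict_apply_univ]
    simp [Real.volume_Ioc]
  have hmem : ∀ᵐ p ∂((volume.restrict (Set.Ioc (0:ℝ) 1)).prod α),
      p ∈ Set.Ioc (0:ℝ) 1 ×ˢ (Set.univ : Set Ω) := by
    rw [Measure.restrict_prod_eq_prod_univ]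
    exact ae_restrict_mem (measurableSet_Ioc.prod MeasurableSet.univ)
  have hInt : Integrable (Function.uncurry F)
      ((volume.restrict (Set.Ioc (0:ℝ) 1)).prod α) := by
    refine (integrable_const (K * (2 * C + 2 * C))).mono' hFm.aestronglyMeasurable ?_
    filter_upwards [hmem] with p hp
    have ht1 : |p.1| ≤ 1 := abs_le.mpr ⟨by linarith [hp.1.1], hp.1.2⟩
    have hh := hdens_le hA hApos hu₀ hu₁ hbd₀ hbd₁ ht1 p.2
    have hhn := hdens_nonneg hA hApos hu₀ hu₁ hbd₀ hbd₁ p.1 p.2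
    have habs : |(u₁ p.2 - u₀ p.2) - Zd α A u₀ u₁ p.1 / Zf α A u₀ u₁ p.1| ≤ 2 * C + 2 * C :=
      (abs_sub _ _).trans
        (add_le_add (vabs hbd₀ hbd₁ p.2) (Zd_abs_le hA hApos hu₀ hu₁ hbd₀ hbd₁ p.1))
    have hFnn : 0 ≤ Function.uncurry F p := mul_nonneg hhn (abs_nonneg _)
    rw [Real.norm_eq_abs, abs_of_nonneg hFnn]
    exact mul_le_mul hh habs (abs_nonneg _) hKnn
  have hGint : Integrable (fun x => ∫ t in Set.Ioc (0:ℝ) 1, F t x) α :=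
    hInt.integral_prod_right
  have hswap : ∫ t in Set.Ioc (0:ℝ) 1, (∫ x, F t x ∂α) =
      ∫ x, (∫ t in Set.Ioc (0:ℝ) 1, F t x) ∂α :=
    integral_integral_swap hInt
  have hioc : ∀ x : Ω, (∫ t in (0:ℝ)..1, F t x) = ∫ t in Set.Ioc (0:ℝ) 1, F t x :=
    fun x => intervalIntegral.integral_of_le zero_le_one
  calc (((lamMeas α A u₀ u₁ 1).toSignedMeasure -
        (lamMeas α A u₀ u₁ 0).toSignedMeasure).totalVariation Set.univ).toReal
      ≤ ∫ x, |hdens α A u₀ u₁ 1 x - hdens α A u₀ u₁ 0 x| ∂α :=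
        tv_le hA hApos hu₀ hu₁ hbd₀ hbd₁ hprob
    _ ≤ ∫ x, (∫ t in Set.Ioc (0:ℝ) 1, F t x) ∂α := by
        refine integral_mono_of_nonneg (Filter.Eventually.of_forall fun x => abs_nonneg _)
          hGint (Filter.Eventually.of_forall fun x => ?_)
        show |hdens α A u₀ u₁ 1 x - hdens α A u₀ u₁ 0 x| ≤ ∫ t in Set.Ioc (0:ℝ) 1, F t x
        rw [← hioc x]
        exact hdens_ftc hA hApos hu₀ hu₁ hbd₀ hbd₁ x
    _ = ∫ t in (0:ℝ)..1, ∫ x, F t x ∂α := by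
        rw [intervalIntegral.integral_of_le zero_le_one]
        exact hswap.symm
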